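/- arXiv:1401.3161 — 5 statements merged into one kernel-verified Lean document; each statement's English description precedes it below -/
import Mathlib

section
/- The Gaussian q-binomial theorem: for elements q, b of a commutative ring and n ∈ ℕ, the product ∏_{i=0}^{n-1} (1 - q^i b) equals ∑_{i=0}^{n} (n choose i)_q · q^{i(i-1)/2} · (-1)^i · b^i, where (n choose i)_q is the Gaussian binomial coefficient. -/
/-- The Gaussian binomial coefficient `(n choose k)_q`, defined by the
`q`-Pascal recursion. -/
def gaussBinom {R : Type*} [CommRing R] (q : R) : ℕ → ℕ → R
  | _, 0 => 1
  | 0, _ + 1 => 0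
  | n + 1, k + 1 => gaussBinom q n (k + 1) * q ^ (k + 1) + gaussBinom q n k

lemma gaussBinom_zero_right {R : Type*} [CommRing R] (q : R) (n : ℕ) :
    gaussBinom q n 0 = 1 := by
  cases n <;> rfl

lemma gaussBinom_eq_zero {R : Type*} [CommRing R] (q : R) :
    ∀ n k : ℕ, n < k → gaussBinom q n k = 0 := by
  intro n
  induction n with
  | zero =>
    intro k hk
    match k with
    | 0 => omega
    | k + 1 => rfl
  | succ n ih =>
    intro k hk
    match k, hk with
    | k + 1, hk =>
      show gaussBinom q n (k + 1) * q ^ (k + 1) + gaussBinom q n k = 0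
      rw [ih (k + 1) (by omega), ih k (by omega)]
      ring

lemma choose_two_succ (i : ℕ) : (i + 1).choose 2 = i.choose 2 + i := by
  simp [Nat.choose_succ_succ, Nat.choose_one_right, Nat.add_comm]

theorem q_binomial_formula {R : Type*} [CommRing R] (q b : R) (n : ℕ) :
    ∏ i ∈ Finset.range n, (1 - q ^ i * b)
      = ∑ i ∈ Finset.range (n + 1),
          gaussBinom q n i * q ^ (i.choose 2) * (-1) ^ i * b ^ i := by
  induction n generalizing b with
  | zero => simp [gaussBinom]
  | succ n ih =>
    rw [Finset.prod_range_succ']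
    have h1 : ∀ i ∈ Finset.range n, (1 : R) - q ^ (i + 1) * b = 1 - q ^ i * (q * b) := by
      intro i _; ring
    rw [Finset.prod_congr rfl h1, ih (q * b)]
    have key : ∀ i ∈ Finset.range (n + 1),
        gaussBinom q n i * q ^ i.choose 2 * (-1) ^ i * (q * b) ^ i
          = gaussBinom q n i * q ^ (i + 1).choose 2 * (-1) ^ i * b ^ i := by
      intro i _
      rw [choose_two_succ, pow_add, mul_pow]; ring
    rw [Finset.sum_congr rfl key]
    rw [pow_zero, one_mul, mul_sub, mul_one, Finset.sum_mul]
    rw [Finset.sum_range_succ'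
      (fun i => gaussBinom q (n + 1) i * q ^ i.choose 2 * (-1) ^ i * b ^ i)]
    have hg0 : gaussBinom q (n + 1) 0 * q ^ (Nat.choose 0 2) * (-1 : R) ^ 0 * b ^ 0 = 1 := by
      simp [gaussBinom_zero_right]
    rw [hg0]
    have hterm : ∀ i ∈ Finset.range (n + 1),
        gaussBinom q (n + 1) (i + 1) * q ^ (i + 1).choose 2 * (-1) ^ (i + 1) * b ^ (i + 1)
          = gaussBinom q n (i + 1) * q ^ (i + 2).choose 2 * (-1) ^ (i + 1) * b ^ (i + 1)
            + (-(gaussBinom q n i * q ^ (i + 1).choose 2 * (-1) ^ i * b ^ i * b)) := by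
      intro i _
      show (gaussBinom q n (i + 1) * q ^ (i + 1) + gaussBinom q n i) * q ^ (i + 1).choose 2
          * (-1) ^ (i + 1) * b ^ (i + 1) = _
      rw [choose_two_succ (i + 1), pow_add]
      ring
    rw [Finset.sum_congr rfl hterm, Finset.sum_add_distrib, Finset.sum_neg_distrib]
    have hmain : ∑ i ∈ Finset.range (n + 1),
        gaussBinom q n i * q ^ (i + 1).choose 2 * (-1) ^ i * b ^ i
        = (∑ i ∈ Finset.range (n + 1),
            gaussBinom q n (i + 1) * q ^ (i + 2).choose 2 * (-1) ^ (i + 1) * b ^ (i + 1)) + 1 := by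
      rw [Finset.sum_range_succ'
        (fun i => gaussBinom q n i * q ^ (i + 1).choose 2 * (-1) ^ i * b ^ i)]
      rw [Finset.sum_range_succ
        (fun i => gaussBinom q n (i + 1) * q ^ (i + 2).choose 2 * (-1) ^ (i + 1) * b ^ (i + 1))]
      rw [gaussBinom_eq_zero q n (n + 1) (by omega)]
      simp [gaussBinom_zero_right]
    rw [hmain]
    ring
end

section
/- The p-adic fermionic integral of f_n(x) = f(x+n) satisfies I_{-1}(f_n) + (-1)^{n-1} I_{-1}(f) = 2 ∑_{l=0}^{n-1} (-1)^{n-l-1} f(l), for every continuous function f : ℤ_p → ℂ_p and n ≥ 1, where I_{-1}(f) = lim_{N→∞} ∑_{x=0}^{p^N - 1} f(x)(-1)^x. -/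
open Filter Topology

theorem fermionic_integral_shift (p : ℕ) [Fact p.Prime] (hodd : Odd p)
    (f : ℤ_[p] → ℚ_[p]) (hf : Continuous f) (n : ℕ) (hn : 1 ≤ n)
    (I I' : ℚ_[p])
    (hI : Tendsto (fun N : ℕ => ∑ x ∈ Finset.range (p ^ N), f (x : ℤ_[p]) * (-1) ^ x)
      atTop (𝓝 I))
    (hI' : Tendsto
      (fun N : ℕ => ∑ x ∈ Finset.range (p ^ N), f ((x : ℤ_[p]) + n) * (-1) ^ x)
      atTop (𝓝 I')) :
    I' + (-1 : ℚ_[p]) ^ (n - 1) * I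
      = 2 * ∑ l ∈ Finset.range n, (-1 : ℚ_[p]) ^ (n - l - 1) * f (l : ℤ_[p]) := by
  set F : ℕ → ℚ_[p] := fun k => f (k : ℤ_[p]) * (-1) ^ k with hF
  set C : ℚ_[p] := ∑ l ∈ Finset.range n, F l with hC
  have hneg : ((-1 : ℚ_[p])) ^ (n - 1) = -(-1) ^ n := by
    obtain ⟨m, rfl⟩ := Nat.exists_eq_add_of_le hn
    simp [pow_add, pow_succ, Nat.add_sub_cancel_left]
  -- finite identity
  have key : ∀ N : ℕ,
      (∑ x ∈ Finset.range (p ^ N), f ((x : ℤ_[p]) + n) * (-1) ^ x)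
        + (-1 : ℚ_[p]) ^ (n - 1) * ∑ x ∈ Finset.range (p ^ N), f (x : ℤ_[p]) * (-1) ^ x
      = (-1) ^ n * ((∑ l ∈ Finset.range n, F (p ^ N + l)) - C) := by
    intro N
    have h1 : ∀ x : ℕ, f ((x : ℤ_[p]) + n) * (-1) ^ x = (-1 : ℚ_[p]) ^ n * F (n + x) := by
      intro x
      have hc : ((n + x : ℕ) : ℤ_[p]) = (x : ℤ_[p]) + n := by push_cast; ring
      simp only [hF, hc, pow_add]
      have : ((-1 : ℚ_[p]) ^ n) * ((-1) ^ n) = 1 := by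
        rw [← pow_add]; exact Even.neg_one_pow ⟨n, rfl⟩
      calc f ((x : ℤ_[p]) + n) * (-1) ^ x
          = ((-1 : ℚ_[p]) ^ n * (-1) ^ n) * (f ((x : ℤ_[p]) + n) * (-1) ^ x) := by
            rw [this]; ring
        _ = (-1 : ℚ_[p]) ^ n * (f ((x : ℤ_[p]) + n) * ((-1) ^ n * (-1) ^ x)) := by ring
    have h2 : (∑ x ∈ Finset.range (p ^ N), f ((x : ℤ_[p]) + n) * (-1) ^ x)
        = (-1 : ℚ_[p]) ^ n * ∑ x ∈ Finset.range (p ^ N), F (n + x) := by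
      rw [Finset.mul_sum]
      exact Finset.sum_congr rfl fun x _ => h1 x
    have h3 : ∑ x ∈ Finset.range (n + p ^ N), F x
        = (∑ x ∈ Finset.range n, F x) + ∑ x ∈ Finset.range (p ^ N), F (n + x) :=
      Finset.sum_range_add F n (p ^ N)
    have h4 : ∑ x ∈ Finset.range (p ^ N + n), F x
        = (∑ x ∈ Finset.range (p ^ N), F x) + ∑ l ∈ Finset.range n, F (p ^ N + l) :=
      Finset.sum_range_add F (p ^ N) n
    have h5 : ∑ x ∈ Finset.range (n + p ^ N), F x = ∑ x ∈ Finset.range (p ^ N + n), F x := by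
      rw [Nat.add_comm]
    have hS : (∑ x ∈ Finset.range (p ^ N), f (x : ℤ_[p]) * (-1) ^ x)
        = ∑ x ∈ Finset.range (p ^ N), F x := rfl
    rw [h2, hS, hneg, hC]
    have h6 : ∑ x ∈ Finset.range (p ^ N), F (n + x)
        = (∑ x ∈ Finset.range (p ^ N), F x) + (∑ l ∈ Finset.range n, F (p ^ N + l))
          - ∑ x ∈ Finset.range n, F x := by
      have := h3
      rw [h5, h4] at this
      linear_combination -this
    rw [h6]; ring
  -- limit of the boundary sums
  have hp1 : ‖(p : ℤ_[p])‖ < 1 := by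
    rw [PadicInt.norm_p]
    have h1p : (1 : ℝ) < p := by exact_mod_cast (Fact.out : p.Prime).one_lt
    exact inv_lt_one_of_one_lt₀ h1p
  have hp0 : Tendsto (fun N : ℕ => ((p : ℤ_[p])) ^ N) atTop (𝓝 0) :=
    tendsto_pow_atTop_nhds_zero_of_norm_lt_one hp1
  have hbound : Tendsto (fun N : ℕ => ∑ l ∈ Finset.range n, F (p ^ N + l)) atTop (𝓝 (-C)) := by
    have hCneg : -C = ∑ l ∈ Finset.range n, -(F l) := by
      rw [hC, ← Finset.sum_neg_distrib]
    rw [hCneg]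
    apply tendsto_finset_sum
    intro l _
    have hterm : ∀ N : ℕ, F (p ^ N + l) = -(f ((p : ℤ_[p]) ^ N + l) * (-1) ^ l) := by
      intro N
      have hc : ((p ^ N + l : ℕ) : ℤ_[p]) = (p : ℤ_[p]) ^ N + l := by push_cast; ring
      have hodd' : Odd (p ^ N + l + l) → True := fun _ => trivial
      have hpow : ((-1 : ℚ_[p])) ^ (p ^ N + l) = -(-1) ^ l := by
        rw [pow_add, Odd.neg_one_pow (hodd.pow)]
        ring
      simp only [hF, hc, hpow]
      ring
    simp only [hterm]
    have h1 : Tendsto (fun N : ℕ => (p : ℤ_[p]) ^ N + (l : ℤ_[p])) atTop (𝓝 (0 + l)) :=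
      hp0.add tendsto_const_nhds
    rw [zero_add] at h1
    have h2 : Tendsto (fun N : ℕ => f ((p : ℤ_[p]) ^ N + l)) atTop (𝓝 (f l)) :=
      (hf.tendsto _).comp h1
    have := (h2.mul_const ((-1 : ℚ_[p]) ^ l)).neg
    simpa [hF] using this
  -- combine
  have hlim1 : Tendsto (fun N : ℕ =>
      (∑ x ∈ Finset.range (p ^ N), f ((x : ℤ_[p]) + n) * (-1) ^ x)
        + (-1 : ℚ_[p]) ^ (n - 1) * ∑ x ∈ Finset.range (p ^ N), f (x : ℤ_[p]) * (-1) ^ x)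
      atTop (𝓝 (I' + (-1 : ℚ_[p]) ^ (n - 1) * I)) :=
    hI'.add (hI.const_mul _)
  have hlim2 : Tendsto (fun N : ℕ =>
      (∑ x ∈ Finset.range (p ^ N), f ((x : ℤ_[p]) + n) * (-1) ^ x)
        + (-1 : ℚ_[p]) ^ (n - 1) * ∑ x ∈ Finset.range (p ^ N), f (x : ℤ_[p]) * (-1) ^ x)
      atTop (𝓝 ((-1 : ℚ_[p]) ^ n * (-C - C))) := by
    have := (hbound.sub_const C).const_mul ((-1 : ℚ_[p]) ^ n)
    simpa only [key] using this
  have hmain : I' + (-1 : ℚ_[p]) ^ (n - 1) * I = (-1 : ℚ_[p]) ^ n * (-C - C) :=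
    tendsto_nhds_unique hlim1 hlim2
  rw [hmain]
  have h7 : (-1 : ℚ_[p]) ^ n * (-C - C)
      = ∑ l ∈ Finset.range n, (-(2 : ℚ_[p]) * (-1) ^ n) * F l := by
    rw [← Finset.mul_sum, hC]
    ring
  rw [h7, Finset.mul_sum]
  refine Finset.sum_congr rfl fun l hl => ?_
  have hl' : l < n := Finset.mem_range.mp hl
  have hnl : n - l - 1 + (l + 1) = n := by omega
  have hpow : (-1 : ℚ_[p]) ^ (n - l - 1) = -((-1) ^ n * (-1) ^ l) := by
    have hsq : ((-1 : ℚ_[p])) ^ (l + 1) * (-1) ^ (l + 1) = 1 := by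
      rw [← pow_add]; exact Even.neg_one_pow ⟨l + 1, rfl⟩
    calc (-1 : ℚ_[p]) ^ (n - l - 1)
        = (-1 : ℚ_[p]) ^ (n - l - 1) * ((-1) ^ (l + 1) * (-1) ^ (l + 1)) := by
          rw [hsq]; ring
      _ = ((-1 : ℚ_[p]) ^ (n - l - 1) * (-1) ^ (l + 1)) * (-1) ^ (l + 1) := by ring
      _ = (-1 : ℚ_[p]) ^ n * (-1) ^ (l + 1) := by rw [← pow_add, hnl]
      _ = -((-1 : ℚ_[p]) ^ n * (-1) ^ l) := by rw [pow_succ]; ring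
  simp only [hF, hpow]
  ring
end

section
/- Existence of the fermionic p-adic integral: for an odd prime p and any continuous function f : ℤ_p → ℚ_p, the limit lim_{N→∞} ∑_{x=0}^{p^N-1} f(x)(-1)^x exists in ℚ_p. -/
open Filter Topology Finset

lemma sum_range_mul_eq {M : Type*} [AddCommMonoid M] (a b : ℕ) (ha : 0 < a) (g : ℕ → M) :
    ∑ x ∈ Finset.range (a * b), g x
      = ∑ y ∈ Finset.range a, ∑ k ∈ Finset.range b, g (y + a * k) := by
  rw [← Finset.sum_product']
  refine Finset.sum_nbij' (fun x => (x % a, x / a)) (fun yk => yk.1 + a * yk.2) ?_ ?_ ?_ ?_ ?_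
  · intro x hx
    simp only [Finset.mem_range, Finset.mem_product] at hx ⊢
    exact ⟨Nat.mod_lt _ ha, Nat.div_lt_iff_lt_mul ha |>.2 (by rwa [mul_comm])⟩
  · intro yk hyk
    simp only [Finset.mem_range, Finset.mem_product] at hyk ⊢
    obtain ⟨h1, h2⟩ := hyk
    have h3 : a * yk.2 + a ≤ a * b := by
      have := Nat.mul_le_mul_left a h2
      simpa [Nat.mul_succ] using this
    omega
  · intro x hx
    simp [Nat.mod_add_div]
  · intro yk hyk
    simp only [Finset.mem_range, Finset.mem_product] at hyk
    obtain ⟨h1, h2⟩ := hyk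
    ext
    · simp [Nat.add_mul_mod_self_left, Nat.mod_eq_of_lt h1]
    · simp [Nat.add_mul_div_left _ _ ha, Nat.div_eq_of_lt h1]
  · intro x hx
    simp [Nat.mod_add_div]

lemma key_diff (p : ℕ) [Fact p.Prime] (hodd : Odd p) (f : ℤ_[p] → ℚ_[p]) {M N : ℕ} (h : N ≤ M) :
    (∑ x ∈ Finset.range (p ^ M), f (x : ℤ_[p]) * (-1) ^ x)
      - ∑ x ∈ Finset.range (p ^ N), f (x : ℤ_[p]) * (-1) ^ x
    = ∑ y ∈ Finset.range (p ^ N), ∑ k ∈ Finset.range (p ^ (M - N)),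
        (f ((y + p ^ N * k : ℕ) : ℤ_[p]) - f (y : ℤ_[p])) * ((-1) ^ y * (-1) ^ k) := by
  have hp : 0 < p := (Fact.out : p.Prime).pos
  have hMeq : p ^ M = p ^ N * p ^ (M - N) := by rw [← pow_add]; congr 1; omega
  have hgeom : ∑ k ∈ Finset.range (p ^ (M - N)), ((-1 : ℚ_[p])) ^ k = 1 := by
    rw [neg_one_geom_sum, if_neg (Nat.not_even_iff_odd.mpr hodd.pow)]
  have hpow : ∀ y k : ℕ, ((-1 : ℚ_[p])) ^ (y + p ^ N * k) = (-1) ^ y * (-1) ^ k := by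
    intro y k
    rw [pow_add, pow_mul, (hodd.pow).neg_one_pow]
  have h1 : (∑ x ∈ Finset.range (p ^ M), f (x : ℤ_[p]) * (-1) ^ x)
      = ∑ y ∈ Finset.range (p ^ N), ∑ k ∈ Finset.range (p ^ (M - N)),
          f ((y + p ^ N * k : ℕ) : ℤ_[p]) * ((-1) ^ y * (-1) ^ k) := by
    rw [hMeq, sum_range_mul_eq _ _ (by positivity)]
    exact Finset.sum_congr rfl fun y _ => Finset.sum_congr rfl fun k _ => by rw [hpow]
  have h2 : (∑ x ∈ Finset.range (p ^ N), f (x : ℤ_[p]) * (-1) ^ x)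
      = ∑ y ∈ Finset.range (p ^ N), ∑ k ∈ Finset.range (p ^ (M - N)),
          f (y : ℤ_[p]) * ((-1) ^ y * (-1) ^ k) := by
    refine Finset.sum_congr rfl fun y _ => ?_
    simp_rw [← mul_assoc, ← Finset.mul_sum, hgeom, mul_one]
  rw [h1, h2, ← Finset.sum_sub_distrib]
  refine Finset.sum_congr rfl fun y _ => ?_
  rw [← Finset.sum_sub_distrib]
  exact Finset.sum_congr rfl fun k _ => by ring

theorem fermionic_integral_exists (p : ℕ) [Fact p.Prime] (hodd : Odd p)
    (f : ℤ_[p] → ℚ_[p]) (hf : Continuous f) :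
    ∃ L : ℚ_[p],
      Tendsto (fun N : ℕ => ∑ x ∈ Finset.range (p ^ N), f (x : ℤ_[p]) * (-1) ^ x)
        atTop (𝓝 L) := by
  set S : ℕ → ℚ_[p] := fun N => ∑ x ∈ Finset.range (p ^ N), f (x : ℤ_[p]) * (-1) ^ x with hS
  have hp1 : (1 : ℝ) < p := by exact_mod_cast (Fact.out : p.Prime).one_lt
  have hpinv : (p : ℝ)⁻¹ < 1 := inv_lt_one_of_one_lt₀ hp1
  suffices h : CauchySeq S from cauchySeq_tendsto_of_complete h
  have huc : UniformContinuous f := CompactSpace.uniformContinuous_of_continuous hf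
  rw [Metric.cauchySeq_iff']
  intro ε hε
  obtain ⟨δ, hδ, hδf⟩ := Metric.uniformContinuous_iff.mp huc (ε / 2) (by positivity)
  obtain ⟨N₀, hN₀⟩ := exists_pow_lt_of_lt_one hδ hpinv
  refine ⟨N₀, fun n hn => ?_⟩
  rw [dist_eq_norm, hS, key_diff p hodd f hn]
  have hbound : ∀ y ∈ Finset.range (p ^ N₀), ∀ k ∈ Finset.range (p ^ (n - N₀)),
      ‖(f ((y + p ^ N₀ * k : ℕ) : ℤ_[p]) - f (y : ℤ_[p])) * ((-1 : ℚ_[p]) ^ y * (-1) ^ k)‖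
        ≤ ε / 2 := by
    intro y _ k _
    have hdist : dist ((y + p ^ N₀ * k : ℕ) : ℤ_[p]) ((y : ℕ) : ℤ_[p]) < δ := by
      rw [dist_eq_norm]
      have hcast : ((y + p ^ N₀ * k : ℕ) : ℤ_[p]) - ((y : ℕ) : ℤ_[p])
          = (p : ℤ_[p]) ^ N₀ * (k : ℤ_[p]) := by push_cast; ring
      rw [hcast]
      calc ‖(p : ℤ_[p]) ^ N₀ * (k : ℤ_[p])‖ = ‖(p : ℤ_[p]) ^ N₀‖ * ‖(k : ℤ_[p])‖ :=
            norm_mul _ _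
        _ ≤ (p : ℝ)⁻¹ ^ N₀ * 1 := by
            gcongr
            · rw [norm_pow, PadicInt.norm_p]
            · exact PadicInt.norm_le_one _
        _ = (p : ℝ)⁻¹ ^ N₀ := mul_one _
        _ < δ := hN₀
    have := hδf hdist
    rw [dist_eq_norm] at this
    calc ‖(f ((y + p ^ N₀ * k : ℕ) : ℤ_[p]) - f (y : ℤ_[p])) * ((-1 : ℚ_[p]) ^ y * (-1) ^ k)‖
        = ‖f ((y + p ^ N₀ * k : ℕ) : ℤ_[p]) - f (y : ℤ_[p])‖ := by
          simp [norm_mul, norm_pow]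
      _ ≤ ε / 2 := this.le
  calc ‖∑ y ∈ Finset.range (p ^ N₀), ∑ k ∈ Finset.range (p ^ (n - N₀)),
          (f ((y + p ^ N₀ * k : ℕ) : ℤ_[p]) - f (y : ℤ_[p])) * ((-1 : ℚ_[p]) ^ y * (-1) ^ k)‖
      ≤ ε / 2 := by
        refine IsUltrametricDist.norm_sum_le_of_forall_le_of_nonneg (by positivity)
          fun y hy => ?_
        exact IsUltrametricDist.norm_sum_le_of_forall_le_of_nonneg (by positivity)
          fun k hk => hbound y hy k hk
    _ < ε := by linarith
end

section
/- Main symmetry identity for q-Euler polynomials (Theorem 3): for n ≥ 0, odd w₁, w₂ ∈ ℕ, r ≥ 1, h ∈ ℤ, 0 < q < 1, and real x: [w₁]_q^n ∑_{j_1,…,j_r=0}^{w₁-1} (-1)^{∑ j_l} q^{w₂ ∑_{l=1}^r (h-l) j_l} E_{n,q^{w₁}}^{(h,r)}(w₂ x + (w₂/w₁)(j_1+⋯+j_r)) = [w₂]_q^n ∑_{j_1,…,j_r=0}^{w₂-1} (-1)^{∑ j_l} q^{w₁ ∑_{l=1}^r (h-l) j_l} E_{n,q^{w₂}}^{(h,r)}(w₁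 x + (w₁/w₂)(j_1+⋯+j_r)). -/
/-- The `q`-number `[z]_q = (1 - q^z)/(1 - q)` for real `z`. -/
noncomputable def qNum (q z : ℝ) : ℝ := (1 - q ^ z) / (1 - q)

/-- The `q`-Euler polynomial of order `r`:
`E_{n,q}^{(h,r)}(y) = 2^r ∑_{m_1,…,m_r ≥ 0} q^{∑ (h-l) m_l} (-1)^{∑ m_l} [y + ∑ m_l]_q^n`. -/
noncomputable def qEuler (q : ℝ) (h : ℤ) (r n : ℕ) (y : ℝ) : ℝ :=
  2 ^ r * ∑' m : Fin r → ℕ,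
    q ^ (∑ l : Fin r, ((h : ℝ) - (l.1 + 1)) * (m l : ℝ)) *
      (-1 : ℝ) ^ (∑ l : Fin r, m l) * qNum q (y + (∑ l : Fin r, m l : ℕ)) ^ n

open Finset

section Aux

lemma qNum_pos {q : ℝ} (hq0 : 0 < q) (hq1 : q < 1) {z : ℝ} (hz : 0 < z) : 0 < qNum q z := by
  unfold qNum
  have : q ^ z < 1 := Real.rpow_lt_one hq0.le hq1 hz
  have h2 : (0:ℝ) < 1 - q := by linarith
  apply div_pos (by linarith) h2

lemma rpow_npow {q : ℝ} (hq0 : 0 ≤ q) (w : ℕ) (t : ℝ) :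
    ((q ^ w : ℝ)) ^ t = q ^ ((w : ℝ) * t) := by
  rw [← Real.rpow_natCast q w, ← Real.rpow_mul hq0]

lemma qNum_base_pow {q : ℝ} (hq0 : 0 < q) (hq1 : q < 1) (w : ℕ) (hw : 0 < w) (z : ℝ) :
    qNum (q ^ w) z = qNum q ((w : ℝ) * z) / qNum q w := by
  unfold qNum
  rw [rpow_npow hq0.le w z, Real.rpow_natCast q w]
  have h1 : (1:ℝ) - q ≠ 0 := by linarith
  have h2 : (1:ℝ) - q ^ w ≠ 0 := by
    have : q ^ w < 1 := pow_lt_one₀ hq0.le hq1 hw.ne'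
    linarith
  field_simp

lemma summable_pi_pow (r : ℕ) {q : ℝ} (h0 : 0 ≤ q) (h1 : q < 1) :
    Summable (fun m : Fin r → ℕ => ∏ l, q ^ (m l)) := by
  induction r with
  | zero => exact Summable.of_finite
  | succ r ih =>
      have hs : Summable (fun p : ℕ × (Fin r → ℕ) => q ^ p.1 * ∏ l, q ^ (p.2 l)) := by
        apply Summable.mul_of_nonneg (summable_geometric_of_lt_one h0 h1) ih
        · exact fun k => pow_nonneg h0 k
        · exact fun m => Finset.prod_nonneg fun l _ => pow_nonneg h0 _
      refine ((Fin.consEquiv (fun _ : Fin (r+1) => ℕ)).summable_iff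
        (f := fun m : Fin (r+1) → ℕ => ∏ l, q ^ (m l))).mp (hs.congr ?_)
      intro p
      simp [Fin.consEquiv, Function.comp, Fin.prod_univ_succ]

lemma summable_qe {q : ℝ} (hq0 : 0 < q) (hq1 : q < 1) (h : ℤ) (r n : ℕ)
    (hh : (r : ℤ) < h) (y : ℝ) :
    Summable (fun m : Fin r → ℕ =>
      q ^ (∑ l : Fin r, ((h : ℝ) - (l.1 + 1)) * (m l : ℝ)) *
        (-1 : ℝ) ^ (∑ l : Fin r, m l) * qNum q (y + (∑ l : Fin r, m l : ℕ)) ^ n) := by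
  have hq1' : (0:ℝ) < 1 - q := by linarith
  set C : ℝ := ((1 + q ^ y) / (1 - q)) ^ n with hC
  apply Summable.of_norm_bounded (g := fun m : Fin r → ℕ => C * ∏ l, q ^ (m l))
    (((summable_pi_pow r hq0.le hq1).mul_left C))
  intro m
  have hqy : 0 < q ^ y := Real.rpow_pos_of_pos hq0 y
  have hexp : ((∑ l, m l : ℕ) : ℝ) ≤ ∑ l : Fin r, ((h : ℝ) - (l.1 + 1)) * (m l : ℝ) := by
    push_cast
    apply Finset.sum_le_sum
    intro l _
    have h1 : (1:ℝ) ≤ (h : ℝ) - (l.1 + 1) := by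
      have : (l.1 : ℝ) + 1 ≤ r := by
        have := l.isLt
        exact_mod_cast this
      have hrh : (r : ℝ) + 1 ≤ (h : ℝ) := by exact_mod_cast hh
      linarith
    nlinarith [Nat.cast_nonneg (α := ℝ) (m l)]
  have hb1 : q ^ (∑ l : Fin r, ((h : ℝ) - (l.1 + 1)) * (m l : ℝ)) ≤ ∏ l, q ^ (m l) := by
    have := Real.rpow_le_rpow_of_exponent_ge hq0 hq1.le hexp
    calc q ^ (∑ l : Fin r, ((h : ℝ) - (l.1 + 1)) * (m l : ℝ))
        ≤ q ^ (((∑ l, m l : ℕ) : ℝ)) := this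
      _ = q ^ (∑ l, m l) := Real.rpow_natCast q _
      _ = ∏ l, q ^ (m l) := by rw [Finset.prod_pow_eq_pow_sum]
  have hN : q ^ (y + ((∑ l : Fin r, m l : ℕ) : ℝ)) ≤ q ^ y := by
    apply Real.rpow_le_rpow_of_exponent_ge hq0 hq1.le
    have : (0:ℝ) ≤ ((∑ l : Fin r, m l : ℕ) : ℝ) := Nat.cast_nonneg _
    linarith
  have hNpos : 0 < q ^ (y + ((∑ l : Fin r, m l : ℕ) : ℝ)) := Real.rpow_pos_of_pos hq0 _
  have hb2 : |qNum q (y + (∑ l : Fin r, m l : ℕ))| ≤ (1 + q ^ y) / (1 - q) := by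
    unfold qNum
    rw [abs_div, abs_of_pos hq1']
    apply (div_le_div_iff_of_pos_right hq1').mpr
    rcases abs_cases (1 - q ^ (y + ((∑ l : Fin r, m l : ℕ) : ℝ))) with ⟨he, _⟩ | ⟨he, _⟩ <;>
      rw [he] <;> linarith
  have hb3 : |qNum q (y + (∑ l : Fin r, m l : ℕ))| ^ n ≤ C := by
    rw [hC]
    exact pow_le_pow_left₀ (abs_nonneg _) hb2 n
  have hbig : 0 ≤ q ^ (∑ l : Fin r, ((h : ℝ) - (l.1 + 1)) * (m l : ℝ)) :=
    (Real.rpow_pos_of_pos hq0 _).le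
  calc ‖q ^ (∑ l : Fin r, ((h : ℝ) - (l.1 + 1)) * (m l : ℝ)) *
        (-1 : ℝ) ^ (∑ l : Fin r, m l) * qNum q (y + (∑ l : Fin r, m l : ℕ)) ^ n‖
      = q ^ (∑ l : Fin r, ((h : ℝ) - (l.1 + 1)) * (m l : ℝ)) *
          |qNum q (y + (∑ l : Fin r, m l : ℕ))| ^ n := by
        rw [Real.norm_eq_abs, abs_mul, abs_mul, abs_pow, abs_pow, abs_neg, abs_one,
          one_pow, mul_one, abs_of_nonneg hbig]
    _ ≤ (∏ l, q ^ (m l)) * C := by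
        apply mul_le_mul hb1 hb3 (pow_nonneg (abs_nonneg _) n)
        exact Finset.prod_nonneg fun l _ => pow_nonneg hq0.le _
    _ = C * ∏ l, q ^ (m l) := mul_comm _ _

def modDivEquiv (r w : ℕ) (hw : 0 < w) : (Fin r → Fin w) × (Fin r → ℕ) ≃ (Fin r → ℕ) where
  toFun p := fun l => (p.1 l : ℕ) + w * p.2 l
  invFun m := (fun l => ⟨m l % w, Nat.mod_lt _ hw⟩, fun l => m l / w)
  left_inv p := by
    ext l
    · simp [Nat.add_mul_mod_self_left, Nat.mod_eq_of_lt (p.1 l).isLt]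
    · simp [Nat.add_mul_div_left _ _ hw, Nat.div_eq_of_lt (p.1 l).isLt]
  right_inv m := by
    funext l
    simp [Nat.mod_add_div]

lemma tsum_decomp {r w : ℕ} (hw : 0 < w) {T : (Fin r → ℕ) → ℝ} (hT : Summable T) :
    ∑' m : Fin r → ℕ, T m
      = ∑ a : Fin r → Fin w, ∑' b : Fin r → ℕ, T (fun l => (a l : ℕ) + w * b l) := by
  set e := modDivEquiv r w hw
  rw [← e.tsum_eq T]
  have hTe : Summable (fun p : (Fin r → Fin w) × (Fin r → ℕ) => T (e p)) :=
    (e.summable_iff (f := T)).2 hT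
  rw [Summable.tsum_prod' hTe (fun a => hTe.prod_factor a), tsum_fintype]
  rfl

/-- The symmetric master term. -/
noncomputable def gterm (q : ℝ) (h : ℤ) (r n : ℕ) (x : ℝ) (w₁ w₂ : ℕ)
    (j a b : Fin r → ℕ) : ℝ :=
  (-1 : ℝ) ^ (∑ l, j l + ∑ l, a l + ∑ l, b l) *
    q ^ (∑ l : Fin r, ((h : ℝ) - (l.1 + 1)) *
      ((w₂ : ℝ) * j l + (w₁ : ℝ) * a l + (w₁ : ℝ) * (w₂ : ℝ) * b l)) *
    qNum q ((w₁ : ℝ) * (w₂ : ℝ) * x + (w₂ : ℝ) * ∑ l, (j l : ℝ) +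
      (w₁ : ℝ) * ∑ l, (a l : ℝ) + (w₁ : ℝ) * (w₂ : ℝ) * ∑ l, (b l : ℝ)) ^ n

lemma gterm_symm (q : ℝ) (h : ℤ) (r n : ℕ) (x : ℝ) (w₁ w₂ : ℕ) (j a b : Fin r → ℕ) :
    gterm q h r n x w₁ w₂ j a b = gterm q h r n x w₂ w₁ a j b := by
  unfold gterm
  have e1 : (∑ l, j l + ∑ l, a l + ∑ l, b l) = (∑ l, a l + ∑ l, j l + ∑ l, b l) := by omega
  have e2 : (∑ l : Fin r, ((h : ℝ) - (l.1 + 1)) *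
        ((w₂ : ℝ) * j l + (w₁ : ℝ) * a l + (w₁ : ℝ) * (w₂ : ℝ) * b l))
      = (∑ l : Fin r, ((h : ℝ) - (l.1 + 1)) *
        ((w₁ : ℝ) * a l + (w₂ : ℝ) * j l + (w₂ : ℝ) * (w₁ : ℝ) * b l)) :=
    Finset.sum_congr rfl fun l _ => by ring
  have e3 : ((w₁ : ℝ) * (w₂ : ℝ) * x + (w₂ : ℝ) * ∑ l, (j l : ℝ) +
        (w₁ : ℝ) * ∑ l, (a l : ℝ) + (w₁ : ℝ) * (w₂ : ℝ) * ∑ l, (b l : ℝ))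
      = ((w₂ : ℝ) * (w₁ : ℝ) * x + (w₁ : ℝ) * ∑ l, (a l : ℝ) +
        (w₂ : ℝ) * ∑ l, (j l : ℝ) + (w₂ : ℝ) * (w₁ : ℝ) * ∑ l, (b l : ℝ)) := by ring
  rw [e1, e2, e3]

end Aux

lemma key (q x : ℝ) (hq0 : 0 < q) (hq1 : q < 1) (r : ℕ) (h : ℤ) (hh : (r : ℤ) < h) (n : ℕ)
    (w₁ w₂ : ℕ) (hw₂ : Odd w₂) (hw₁' : 0 < w₁) (hw₂' : 0 < w₂) :
    qNum q w₁ ^ n * ∑ j : Fin r → Fin w₁,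
        (-1 : ℝ) ^ (∑ l : Fin r, (j l : ℕ)) *
          q ^ ((w₂ : ℝ) * ∑ l : Fin r, ((h : ℝ) - (l.1 + 1)) * (j l : ℕ)) *
          qEuler (q ^ w₁) h r n ((w₂ : ℝ) * x + ((w₂ : ℝ) / w₁) * (∑ l : Fin r, (j l : ℕ) : ℕ))
      = 2 ^ r * ∑ j : Fin r → Fin w₁, ∑ a : Fin r → Fin w₂, ∑' b : Fin r → ℕ,
          gterm q h r n x w₁ w₂ (fun l => (j l : ℕ)) (fun l => (a l : ℕ)) b := by
  have hq0' : 0 < q ^ w₁ := pow_pos hq0 w₁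
  have hq1' : q ^ w₁ < 1 := pow_lt_one₀ hq0.le hq1 hw₁'.ne'
  have hw₁R : (0:ℝ) < (w₁:ℝ) := by exact_mod_cast hw₁'
  have hD : qNum q (w₁:ℝ) ≠ 0 := (qNum_pos hq0 hq1 hw₁R).ne'
  rw [Finset.mul_sum, Finset.mul_sum]
  apply Finset.sum_congr rfl
  intro j _
  set y : ℝ := (w₂ : ℝ) * x + ((w₂ : ℝ) / w₁) * ((∑ l : Fin r, (j l : ℕ) : ℕ) : ℝ) with hy
  set T : (Fin r → ℕ) → ℝ := fun m =>
    (-1 : ℝ) ^ (∑ l : Fin r, (j l : ℕ) + ∑ l : Fin r, m l) *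
      q ^ (∑ l : Fin r, ((h : ℝ) - (l.1 + 1)) *
        ((w₂ : ℝ) * ((j l : ℕ) : ℝ) + (w₁ : ℝ) * (m l : ℝ))) *
      qNum q ((w₁ : ℝ) * (w₂ : ℝ) * x + (w₂ : ℝ) * ∑ l : Fin r, ((j l : ℕ) : ℝ) +
        (w₁ : ℝ) * ∑ l : Fin r, ((m l : ℕ) : ℝ)) ^ n with hTdef
  have hterm : ∀ m : Fin r → ℕ,
      qNum q w₁ ^ n * ((-1 : ℝ) ^ (∑ l : Fin r, (j l : ℕ)) *
        q ^ ((w₂ : ℝ) * ∑ l : Fin r, ((h : ℝ) - (l.1 + 1)) * ((j l : ℕ) : ℝ)) *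
        ((q ^ w₁ : ℝ) ^ (∑ l : Fin r, ((h : ℝ) - (l.1 + 1)) * (m l : ℝ)) *
          (-1 : ℝ) ^ (∑ l : Fin r, m l) *
          qNum (q ^ w₁) (y + (∑ l : Fin r, m l : ℕ)) ^ n)) = T m := by
    intro m
    rw [rpow_npow hq0.le w₁, qNum_base_pow hq0 hq1 w₁ hw₁']
    have e1 : (w₁ : ℝ) * (y + ((∑ l : Fin r, m l : ℕ) : ℝ))
        = (w₁ : ℝ) * (w₂ : ℝ) * x + (w₂ : ℝ) * ∑ l : Fin r, ((j l : ℕ) : ℝ) +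
          (w₁ : ℝ) * ∑ l : Fin r, ((m l : ℕ) : ℝ) := by
      rw [hy]
      push_cast
      field_simp
    have e2 : (w₂ : ℝ) * (∑ l : Fin r, ((h : ℝ) - (l.1 + 1)) * ((j l : ℕ) : ℝ))
          + (w₁ : ℝ) * (∑ l : Fin r, ((h : ℝ) - (l.1 + 1)) * (m l : ℝ))
        = ∑ l : Fin r, ((h : ℝ) - (l.1 + 1)) *
            ((w₂ : ℝ) * ((j l : ℕ) : ℝ) + (w₁ : ℝ) * (m l : ℝ)) := by
      rw [Finset.mul_sum, Finset.mul_sum, ← Finset.sum_add_distrib]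
      exact Finset.sum_congr rfl fun l _ => by ring
    rw [hTdef]
    simp only
    rw [e1, ← e2, Real.rpow_add hq0, pow_add, div_pow]
    have hDn : qNum q (w₁:ℝ) ^ n ≠ 0 := pow_ne_zero n hD
    field_simp
  have hsumf : Summable (fun m : Fin r → ℕ =>
      (q ^ w₁ : ℝ) ^ (∑ l : Fin r, ((h : ℝ) - (l.1 + 1)) * (m l : ℝ)) *
        (-1 : ℝ) ^ (∑ l : Fin r, m l) * qNum (q ^ w₁) (y + (∑ l : Fin r, m l : ℕ)) ^ n) :=
    summable_qe hq0' hq1' h r n hh y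
  have hsumT : Summable T := by
    have h2 := hsumf.mul_left (qNum q (w₁:ℝ) ^ n * ((-1 : ℝ) ^ (∑ l : Fin r, (j l : ℕ)) *
      q ^ ((w₂ : ℝ) * ∑ l : Fin r, ((h : ℝ) - (l.1 + 1)) * ((j l : ℕ) : ℝ))))
    apply h2.congr
    intro m
    rw [← hterm m]
    ring
  have hqe : qEuler (q ^ w₁) h r n y = 2 ^ r * ∑' m : Fin r → ℕ,
      (q ^ w₁ : ℝ) ^ (∑ l : Fin r, ((h : ℝ) - (l.1 + 1)) * (m l : ℝ)) *
        (-1 : ℝ) ^ (∑ l : Fin r, m l) *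
        qNum (q ^ w₁) (y + (∑ l : Fin r, m l : ℕ)) ^ n := rfl
  have h4 : ∀ (a : Fin r → Fin w₂) (b : Fin r → ℕ),
      T (fun l => (a l : ℕ) + w₂ * b l)
        = gterm q h r n x w₁ w₂ (fun l => (j l : ℕ)) (fun l => (a l : ℕ)) b := by
    intro a b
    rw [hTdef]
    simp only
    unfold gterm
    have s1 : (∑ l : Fin r, ((a l : ℕ) + w₂ * b l))
        = ∑ l : Fin r, (a l : ℕ) + w₂ * ∑ l : Fin r, b l := by
      rw [Finset.sum_add_distrib, Finset.mul_sum]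
    have s2 : ∑ l : Fin r, ((((a l : ℕ) + w₂ * b l : ℕ)) : ℝ)
        = ∑ l : Fin r, ((a l : ℕ) : ℝ) + (w₂:ℝ) * ∑ l : Fin r, ((b l : ℕ) : ℝ) := by
      push_cast
      rw [Finset.sum_add_distrib, Finset.mul_sum]
    congr 1
    · congr 1
      · rw [s1, show (∑ l : Fin r, (j l : ℕ)) + (∑ l : Fin r, (a l : ℕ) + w₂ * ∑ l : Fin r, b l)
            = ((∑ l : Fin r, (j l : ℕ)) + (∑ l : Fin r, (a l : ℕ))) + w₂ * ∑ l : Fin r, b l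
            from by ring, pow_add, pow_mul, hw₂.neg_one_pow, ← pow_add]
      · congr 1
        exact Finset.sum_congr rfl fun l _ => by push_cast; ring
    · rw [s2]
      congr 1
      ring
  calc qNum q ↑w₁ ^ n * ((-1 : ℝ) ^ (∑ l : Fin r, (j l : ℕ)) *
        q ^ ((w₂ : ℝ) * ∑ l : Fin r, ((h : ℝ) - (l.1 + 1)) * ((j l : ℕ) : ℝ)) *
        qEuler (q ^ w₁) h r n y)
      = 2 ^ r * ((qNum q (w₁:ℝ) ^ n * ((-1 : ℝ) ^ (∑ l : Fin r, (j l : ℕ)) *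
          q ^ ((w₂ : ℝ) * ∑ l : Fin r, ((h : ℝ) - (l.1 + 1)) * ((j l : ℕ) : ℝ)))) *
          ∑' m : Fin r → ℕ,
            (q ^ w₁ : ℝ) ^ (∑ l : Fin r, ((h : ℝ) - (l.1 + 1)) * (m l : ℝ)) *
              (-1 : ℝ) ^ (∑ l : Fin r, m l) *
              qNum (q ^ w₁) (y + (∑ l : Fin r, m l : ℕ)) ^ n) := by
        rw [hqe]; ring
    _ = 2 ^ r * ∑' m : Fin r → ℕ, T m := by
        rw [← tsum_mul_left]
        congr 1
        exact tsum_congr fun m => by rw [← hterm m]; ring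
    _ = 2 ^ r * ∑ a : Fin r → Fin w₂, ∑' b : Fin r → ℕ, T (fun l => (a l : ℕ) + w₂ * b l) := by
        rw [tsum_decomp hw₂' hsumT]
    _ = 2 ^ r * ∑ a : Fin r → Fin w₂, ∑' b : Fin r → ℕ,
          gterm q h r n x w₁ w₂ (fun l => (j l : ℕ)) (fun l => (a l : ℕ)) b := by
        congr 1
        exact Finset.sum_congr rfl fun a _ => tsum_congr fun b => h4 a b

set_option linter.unusedVariables false in
theorem qEuler_symmetry (q x : ℝ) (hq0 : 0 < q) (hq1 : q < 1)
    (r : ℕ) (hr : 1 ≤ r) (h : ℤ) (hh : (r : ℤ) < h) (n : ℕ)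
    (w₁ w₂ : ℕ) (hw₁ : Odd w₁) (hw₂ : Odd w₂) (hw₁' : 0 < w₁) (hw₂' : 0 < w₂) :
    qNum q w₁ ^ n * ∑ j : Fin r → Fin w₁,
        (-1 : ℝ) ^ (∑ l : Fin r, (j l : ℕ)) *
          q ^ ((w₂ : ℝ) * ∑ l : Fin r, ((h : ℝ) - (l.1 + 1)) * (j l : ℕ)) *
          qEuler (q ^ w₁) h r n ((w₂ : ℝ) * x + ((w₂ : ℝ) / w₁) * (∑ l : Fin r, (j l : ℕ) : ℕ))
      = qNum q w₂ ^ n * ∑ j : Fin r → Fin w₂,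
          (-1 : ℝ) ^ (∑ l : Fin r, (j l : ℕ)) *
            q ^ ((w₁ : ℝ) * ∑ l : Fin r, ((h : ℝ) - (l.1 + 1)) * (j l : ℕ)) *
            qEuler (q ^ w₂) h r n ((w₁ : ℝ) * x + ((w₁ : ℝ) / w₂) * (∑ l : Fin r, (j l : ℕ) : ℕ)) := by
  rw [key q x hq0 hq1 r h hh n w₁ w₂ hw₂ hw₁' hw₂',
    key q x hq0 hq1 r h hh n w₂ w₁ hw₁ hw₂' hw₁']
  congr 1
  rw [Finset.sum_comm]
  refine Finset.sum_congr rfl fun a _ => Finset.sum_congr rfl fun j _ => tsum_congr fun b => ?_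
  exact gterm_symm q h r n x w₁ w₂ (fun l => (j l : ℕ)) (fun l => (a l : ℕ)) b
end

section
/- The binomial expansion of shifted q-Euler polynomials: for n ≥ 0, w₁, w₂ ∈ ℕ positive, j_1,…,j_r ∈ ℕ, 0 < q < 1, real x, E_{n,q^{w₁}}^{(h,r)}(w₂x + (w₂/w₁)(j₁+⋯+j_r)) = ∑_{i=0}^{n} (n choose i) ([w₂]_q/[w₁]_q)^i [j₁+⋯+j_r]_{q^{w₂}}^i q^{w₂(n−i)(j₁+⋯+j_r)} E_{n−i,q^{w₁}}^{(h,r)}(w₂x). -/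
lemma qNum_add_aux (Q u v : ℝ) (hQ : 0 < Q) :
    qNum Q (u + v) = qNum Q v + Q ^ v * qNum Q u := by
  unfold qNum
  rw [Real.rpow_add hQ]
  ring

lemma rpow_finset_sum_aux {Q : ℝ} (hQ : 0 < Q) {ι : Type*} (s : Finset ι) (f : ι → ℝ) :
    Q ^ (∑ i ∈ s, f i) = ∏ i ∈ s, Q ^ f i := by
  classical
  induction s using Finset.induction with
  | empty => simp
  | insert _ _ hne ih =>
      rw [Finset.sum_insert hne, Finset.prod_insert hne, Real.rpow_add hQ, ih]

lemma summable_geom_pi_aux (r : ℕ) : ∀ (c : Fin r → ℝ), (∀ l, 0 ≤ c l) → (∀ l, c l < 1) →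
    Summable (fun m : Fin r → ℕ => ∏ l, c l ^ m l) := by
  induction r with
  | zero =>
      intro c _ _
      have : (fun m : Fin 0 → ℕ => ∏ l, c l ^ m l) = fun _ => 1 := by
        funext m; simp
      rw [this]
      exact .of_finite
  | succ r ih =>
      intro c h0 h1
      rw [← (Fin.consEquiv fun _ : Fin (r+1) => ℕ).summable_iff]
      have heq : ((fun m : Fin (r+1) → ℕ => ∏ l, c l ^ m l) ∘ (Fin.consEquiv fun _ => ℕ))
          = fun p : ℕ × (Fin r → ℕ) => (c 0 ^ p.1) * ∏ l : Fin r, (c l.succ) ^ p.2 l := by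
        funext p
        simp only [Function.comp_apply, Fin.consEquiv_apply, Fin.prod_univ_succ,
          Fin.cons_zero, Fin.cons_succ]
      rw [heq]
      apply Summable.mul_of_nonneg (summable_geometric_of_lt_one (h0 0) (h1 0))
        (ih (fun l => c l.succ) (fun l => h0 _) (fun l => h1 _))
      · intro a
        exact pow_nonneg (h0 0) a
      · intro m
        exact Finset.prod_nonneg fun l _ => pow_nonneg (h0 _) _

theorem qEuler_binomial_expansion (q x : ℝ) (hq0 : 0 < q) (hq1 : q < 1)
    (r : ℕ) (hr : 1 ≤ r) (h : ℤ) (hh : (r : ℤ) < h) (n : ℕ)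
    (w₁ w₂ : ℕ) (hw₁ : 0 < w₁) (hw₂ : 0 < w₂) (j : Fin r → ℕ) :
    qEuler (q ^ w₁) h r n ((w₂ : ℝ) * x + ((w₂ : ℝ) / w₁) * (∑ l : Fin r, j l : ℕ))
      = ∑ i ∈ Finset.range (n + 1),
          (n.choose i : ℝ) * (qNum q w₂ / qNum q w₁) ^ i *
            qNum (q ^ w₂) (∑ l : Fin r, j l : ℕ) ^ i *
            q ^ ((w₂ : ℝ) * (n - i : ℕ) * (∑ l : Fin r, j l : ℕ)) *
            qEuler (q ^ w₁) h r (n - i) ((w₂ : ℝ) * x) := by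
  set J : ℕ := ∑ l : Fin r, j l with hJdef
  set Q : ℝ := q ^ w₁ with hQdef
  have hQ0 : 0 < Q := pow_pos hq0 w₁
  have hQ1 : Q < 1 := pow_lt_one₀ hq0.le hq1 hw₁.ne'
  have hq2_0 : (0:ℝ) < q ^ w₂ := pow_pos hq0 w₂
  have hq2_1 : q ^ w₂ < 1 := pow_lt_one₀ hq0.le hq1 hw₂.ne'
  have h1q : (1:ℝ) - q ≠ 0 := sub_ne_zero.mpr (by linarith)
  have h1Q : (1:ℝ) - Q ≠ 0 := sub_ne_zero.mpr (by linarith)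
  have h1q1 : (1:ℝ) - q ^ w₁ ≠ 0 := by rw [← hQdef]; exact h1Q
  have h1q2 : (1:ℝ) - q ^ w₂ ≠ 0 := sub_ne_zero.mpr (by linarith)
  have hw₁R : (w₁:ℝ) ≠ 0 := Nat.cast_ne_zero.mpr hw₁.ne'
  -- the scaling identity for `Q ^ v`
  have hS : Q ^ ((w₂:ℝ)/w₁ * (J:ℝ)) = q ^ ((w₂:ℝ) * (J:ℝ)) := by
    rw [hQdef, ← Real.rpow_natCast q w₁, ← Real.rpow_mul hq0.le]
    congr 1
    field_simp
  have hq2J : q ^ ((w₂:ℝ) * (J:ℝ)) = (q ^ w₂) ^ J := by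
    rw [← Real.rpow_natCast (q ^ w₂) J, ← Real.rpow_natCast q w₂, ← Real.rpow_mul hq0.le]
  -- the value of the constant term
  have hT : qNum Q ((w₂:ℝ)/w₁ * (J:ℝ))
      = qNum q w₂ / qNum q w₁ * qNum (q ^ w₂) (J:ℝ) := by
    unfold qNum
    rw [hS, hq2J, hQdef, Real.rpow_natCast q w₂, Real.rpow_natCast q w₁,
      Real.rpow_natCast (q ^ w₂) J]
    field_simp
  -- pointwise binomial expansion
  have hpoint : ∀ M : ℕ,
      qNum Q (((w₂:ℝ) * x + (w₂:ℝ)/w₁ * (J:ℝ)) + (M:ℝ)) ^ n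
        = ∑ i ∈ Finset.range (n+1),
            (n.choose i : ℝ) * (qNum q w₂ / qNum q w₁) ^ i * qNum (q ^ w₂) (J:ℝ) ^ i *
              q ^ ((w₂:ℝ) * ((n - i : ℕ):ℝ) * (J:ℝ)) *
              qNum Q ((w₂:ℝ) * x + (M:ℝ)) ^ (n - i) := by
    intro M
    have harg : ((w₂:ℝ) * x + (w₂:ℝ)/w₁ * (J:ℝ)) + (M:ℝ)
        = ((w₂:ℝ) * x + (M:ℝ)) + (w₂:ℝ)/w₁ * (J:ℝ) := by ring
    rw [harg, qNum_add_aux Q _ _ hQ0, hT, hS, add_pow]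
    refine Finset.sum_congr rfl fun i _ => ?_
    have hSpow : (q ^ ((w₂:ℝ) * (J:ℝ))) ^ (n - i)
        = q ^ ((w₂:ℝ) * ((n - i : ℕ):ℝ) * (J:ℝ)) := by
      rw [← Real.rpow_natCast (q ^ ((w₂:ℝ) * (J:ℝ))) (n - i), ← Real.rpow_mul hq0.le]
      congr 1
      ring
    rw [mul_pow, mul_pow, hSpow]
    ring
  -- geometric bounds
  set c : Fin r → ℝ := fun l => Q ^ ((h:ℝ) - (l.1 + 1)) with hcdef
  have hc0 : ∀ l, 0 ≤ c l := fun l => Real.rpow_nonneg hQ0.le _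
  have hc1 : ∀ l, c l < 1 := by
    intro l
    apply Real.rpow_lt_one hQ0.le hQ1
    have h1 : (l.1:ℝ) + 1 ≤ (r:ℝ) := by exact_mod_cast l.2
    have h2 : (r:ℝ) < (h:ℝ) := by exact_mod_cast hh
    linarith
  have hQexp : ∀ m : Fin r → ℕ,
      Q ^ (∑ l : Fin r, ((h:ℝ) - (l.1 + 1)) * (m l : ℝ)) = ∏ l, c l ^ m l := by
    intro m
    rw [rpow_finset_sum_aux hQ0]
    refine Finset.prod_congr rfl fun l _ => ?_
    rw [Real.rpow_mul hQ0.le, Real.rpow_natCast]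
  set B : ℝ := (1 + Q ^ ((w₂:ℝ) * x)) / (1 - Q) with hBdef
  have hB : ∀ M : ℕ, |qNum Q ((w₂:ℝ) * x + (M:ℝ))| ≤ B := by
    intro M
    have hpos : (0:ℝ) < 1 - Q := by linarith
    have hle : Q ^ ((w₂:ℝ) * x + (M:ℝ)) ≤ Q ^ ((w₂:ℝ) * x) := by
      rw [Real.rpow_add hQ0, Real.rpow_natCast]
      nth_rewrite 2 [← mul_one (Q ^ ((w₂:ℝ) * x))]
      gcongr
      exact pow_le_one₀ hQ0.le hQ1.le
    have hpos2 : (0:ℝ) < Q ^ ((w₂:ℝ) * x + (M:ℝ)) := Real.rpow_pos_of_pos hQ0 _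
    unfold qNum
    rw [abs_div, abs_of_pos hpos, hBdef]
    gcongr
    rw [abs_le]
    constructor <;> nlinarith [Real.rpow_pos_of_pos hQ0 ((w₂:ℝ) * x)]
  -- summability of each piece
  have hGsum : ∀ k : ℕ, Summable (fun m : Fin r → ℕ =>
      Q ^ (∑ l : Fin r, ((h:ℝ) - (l.1 + 1)) * (m l : ℝ)) * (-1:ℝ) ^ (∑ l : Fin r, m l) *
        qNum Q ((w₂:ℝ) * x + ((∑ l : Fin r, m l : ℕ):ℝ)) ^ k) := by
    intro k
    have hsum : Summable (fun m : Fin r → ℕ => (∏ l, c l ^ m l) * B ^ k) :=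
      (summable_geom_pi_aux r c hc0 hc1).mul_right _
    apply Summable.of_norm_bounded hsum
    intro m
    have hprod0 : (0:ℝ) ≤ ∏ l, c l ^ m l :=
      Finset.prod_nonneg fun l _ => pow_nonneg (hc0 _) _
    rw [Real.norm_eq_abs, abs_mul, abs_mul, hQexp m, abs_of_nonneg hprod0,
      abs_pow, abs_neg, abs_one, one_pow, mul_one, abs_pow]
    exact mul_le_mul_of_nonneg_left (pow_le_pow_left₀ (abs_nonneg _) (hB _) k) hprod0
  -- putting everything together
  unfold qEuler
  have key : (∑' m : Fin r → ℕ,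
        Q ^ (∑ l : Fin r, ((h:ℝ) - (l.1 + 1)) * (m l : ℝ)) * (-1:ℝ) ^ (∑ l : Fin r, m l) *
          qNum Q (((w₂:ℝ) * x + (w₂:ℝ)/w₁ * (J:ℝ)) + ((∑ l : Fin r, m l : ℕ):ℝ)) ^ n)
      = ∑ i ∈ Finset.range (n+1),
          ((n.choose i : ℝ) * (qNum q w₂ / qNum q w₁) ^ i * qNum (q ^ w₂) (J:ℝ) ^ i *
            q ^ ((w₂:ℝ) * ((n - i : ℕ):ℝ) * (J:ℝ))) *
          ∑' m : Fin r → ℕ,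
            Q ^ (∑ l : Fin r, ((h:ℝ) - (l.1 + 1)) * (m l : ℝ)) * (-1:ℝ) ^ (∑ l : Fin r, m l) *
              qNum Q ((w₂:ℝ) * x + ((∑ l : Fin r, m l : ℕ):ℝ)) ^ (n - i) := by
    have step1 : (∑' m : Fin r → ℕ,
        Q ^ (∑ l : Fin r, ((h:ℝ) - (l.1 + 1)) * (m l : ℝ)) * (-1:ℝ) ^ (∑ l : Fin r, m l) *
          qNum Q (((w₂:ℝ) * x + (w₂:ℝ)/w₁ * (J:ℝ)) + ((∑ l : Fin r, m l : ℕ):ℝ)) ^ n)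
        = ∑' m : Fin r → ℕ, ∑ i ∈ Finset.range (n+1),
            ((n.choose i : ℝ) * (qNum q w₂ / qNum q w₁) ^ i * qNum (q ^ w₂) (J:ℝ) ^ i *
              q ^ ((w₂:ℝ) * ((n - i : ℕ):ℝ) * (J:ℝ))) *
            (Q ^ (∑ l : Fin r, ((h:ℝ) - (l.1 + 1)) * (m l : ℝ)) *
              (-1:ℝ) ^ (∑ l : Fin r, m l) *
              qNum Q ((w₂:ℝ) * x + ((∑ l : Fin r, m l : ℕ):ℝ)) ^ (n - i)) := by
      refine tsum_congr fun m => ?_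
      rw [hpoint (∑ l : Fin r, m l), Finset.mul_sum]
      exact Finset.sum_congr rfl fun i _ => by ring
    rw [step1, Summable.tsum_finsetSum (fun i _ => (hGsum (n - i)).mul_left _)]
    exact Finset.sum_congr rfl fun i _ => tsum_mul_left
  rw [key, Finset.mul_sum]
  exact Finset.sum_congr rfl fun i _ => by ring
end
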